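/- The sequence (M_n) of numbers of marriageable singles partitions is strictly increasing for n ≥ 3: M_n < M_{n+1} for all n ≥ 3. -/
import Mathlib


/-- `π` is a partition of `[n] = {1,…,n}`: blocks are nonempty, pairwise disjoint,
and their union is exactly `{1,…,n}`. -/
def IsPartitionOf (n : ℕ) (π : Finset (Finset ℕ)) : Prop :=
  (∀ A ∈ π, A.Nonempty) ∧
  (∀ A ∈ π, ∀ B ∈ π, A ≠ B → Disjoint A B) ∧
  (∀ x : ℕ, x ∈ Finset.Icc 1 n ↔ ∃ A ∈ π, x ∈ A)

/-- `π` is crossing: two distinct blocks contain `a < c < b < d` with `a,b` in one and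
`c,d` in the other. -/
def Crossing (π : Finset (Finset ℕ)) : Prop :=
  ∃ A ∈ π, ∃ B ∈ π, A ≠ B ∧ ∃ a ∈ A, ∃ b ∈ A, ∃ c ∈ B, ∃ d ∈ B,
    a < c ∧ c < b ∧ b < d

/-- Noncrossing partition of `[n]`. -/
def IsNCPartition (n : ℕ) (π : Finset (Finset ℕ)) : Prop :=
  IsPartitionOf n π ∧ ¬ Crossing π

/-- Replace the singleton blocks `{i}` and `{j}` by the block `{i,j}`. -/
def mergeSingles (π : Finset (Finset ℕ)) (i j : ℕ) : Finset (Finset ℕ) :=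
  insert {i, j} ((π.erase {i}).erase {j})

/-- A marriageable singles partition of `[n]`. -/
def IsMarriageable (n : ℕ) (π : Finset (Finset ℕ)) : Prop :=
  IsNCPartition n π ∧ ∃ i j : ℕ, i ≠ j ∧ {i} ∈ π ∧ {j} ∈ π ∧
    IsNCPartition n (mergeSingles π i j)

/-- A lonely singles partition of `[n]`. -/
def IsLonely (n : ℕ) (π : Finset (Finset ℕ)) : Prop :=
  IsNCPartition n π ∧ ¬ IsMarriageable n π

/-- `C n`: the number of noncrossing partitions of `[n]`. -/
noncomputable def Cnum (n : ℕ) : ℕ := Set.ncard {π : Finset (Finset ℕ) | IsNCPartition n π}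

/-- `M n`: the number of marriageable singles partitions of `[n]`. -/
noncomputable def Mnum (n : ℕ) : ℕ := Set.ncard {π : Finset (Finset ℕ) | IsMarriageable n π}

/-- `L n`: the number of lonely singles partitions of `[n]`. -/
noncomputable def Lnum (n : ℕ) : ℕ := Set.ncard {π : Finset (Finset ℕ) | IsLonely n π}

/-- `NCcount n m k`: number of noncrossing partitions of `[n]` into `m` blocks with
exactly `k` singleton blocks. -/
noncomputable def NCcount (n m k : ℕ) : ℕ :=
  Set.ncard {π : Finset (Finset ℕ) | IsNCPartition n π ∧ π.card = m ∧
    (π.filter fun A => A.card = 1).card = k}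

/-- Binomial coefficient on integers, `0` when an argument is negative. -/
def zchoose (a b : ℤ) : ℤ := if 0 ≤ a ∧ 0 ≤ b then (a.toNat).choose b.toNat else 0

set_option linter.unnecessarySeqFocus false

lemma blocks_subset {n : ℕ} {π : Finset (Finset ℕ)} (h : IsPartitionOf n π) :
    ∀ A ∈ π, A ⊆ Finset.Icc 1 n :=
  fun A hA x hx => (h.2.2 x).2 ⟨A, hA, hx⟩

lemma notMem_top {n : ℕ} {π : Finset (Finset ℕ)} (h : IsPartitionOf n π)
    {A : Finset ℕ} (hA : A ∈ π) : n + 1 ∉ A := by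
  intro hx
  have := blocks_subset h A hA hx
  simp [Finset.mem_Icc] at this

lemma singleton_top_notMem {n : ℕ} {π : Finset (Finset ℕ)} (h : IsPartitionOf n π) :
    ({n+1} : Finset ℕ) ∉ π := fun hm => notMem_top h hm (Finset.mem_singleton_self _)

lemma extend_part {n : ℕ} {π : Finset (Finset ℕ)} (h : IsPartitionOf n π) :
    IsPartitionOf (n+1) (insert {n+1} π) := by
  refine ⟨?_, ?_, ?_⟩
  · intro A hA
    rcases Finset.mem_insert.1 hA with rfl | hA
    · exact ⟨n+1, Finset.mem_singleton_self _⟩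
    · exact h.1 A hA
  · intro A hA B hB hAB
    rcases Finset.mem_insert.1 hA with rfl | hA <;> rcases Finset.mem_insert.1 hB with rfl | hB
    · exact absurd rfl hAB
    · exact Finset.disjoint_singleton_left.2 (notMem_top h hB)
    · exact Finset.disjoint_singleton_right.2 (notMem_top h hA)
    · exact h.2.1 A hA B hB hAB
  · intro x
    constructor
    · intro hx
      rw [Finset.mem_Icc] at hx
      by_cases hx' : x = n + 1
      · exact ⟨{n+1}, Finset.mem_insert_self _ _, by simp [hx']⟩
      · obtain ⟨A, hA, hxA⟩ := (h.2.2 x).1 (Finset.mem_Icc.2 ⟨hx.1, by omega⟩)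
        exact ⟨A, Finset.mem_insert_of_mem hA, hxA⟩
    · rintro ⟨A, hA, hxA⟩
      rcases Finset.mem_insert.1 hA with rfl | hA
      · simp at hxA; simp [hxA, Finset.mem_Icc]
      · have := blocks_subset h A hA hxA
        rw [Finset.mem_Icc] at this ⊢; omega

lemma extend_nc {n : ℕ} {π : Finset (Finset ℕ)} (h : IsNCPartition n π) :
    IsNCPartition (n+1) (insert {n+1} π) := by
  refine ⟨extend_part h.1, ?_⟩
  rintro ⟨A, hA, B, hB, hAB, a, ha, b, hb, c, hc, d, hd, h1, h2, h3⟩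
  rcases Finset.mem_insert.1 hA with rfl | hA
  · simp at ha hb; omega
  · rcases Finset.mem_insert.1 hB with rfl | hB
    · simp at hc hd; omega
    · exact h.2 ⟨A, hA, B, hB, hAB, a, ha, b, hb, c, hc, d, hd, h1, h2, h3⟩

lemma extend_marr {n : ℕ} {π : Finset (Finset ℕ)} (h : IsMarriageable n π) :
    IsMarriageable (n+1) (insert {n+1} π) := by
  obtain ⟨hnc, i, j, hij, hi, hj, hm⟩ := h
  refine ⟨extend_nc hnc, i, j, hij, Finset.mem_insert_of_mem hi, Finset.mem_insert_of_mem hj, ?_⟩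
  have hi' : ({i} : Finset ℕ) ≠ {n+1} := by
    intro e
    exact singleton_top_notMem hnc.1 (e ▸ hi)
  have hj' : ({j} : Finset ℕ) ≠ {n+1} := by
    intro e
    exact singleton_top_notMem hnc.1 (e ▸ hj)
  have key : mergeSingles (insert {n+1} π) i j = insert {n+1} (mergeSingles π i j) := by
    unfold mergeSingles
    rw [Finset.erase_insert_of_ne (Ne.symm hi'), Finset.erase_insert_of_ne (Ne.symm hj'),
      Finset.insert_comm]
  rw [key]
  exact extend_nc hm

lemma parts_finite (n : ℕ) : {π : Finset (Finset ℕ) | IsMarriageable n π}.Finite := by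
  apply Set.Finite.subset ((Finset.Icc 1 n).powerset.powerset.finite_toSet)
  intro π hπ
  rw [Finset.mem_coe, Finset.mem_powerset]
  intro A hA
  exact Finset.mem_powerset.2 (blocks_subset hπ.1.1 A hA)


lemma mem_Icc3 {n : ℕ} (hn : 3 ≤ n) : 3 ∈ Finset.Icc 3 (n+1) := by
  rw [Finset.mem_Icc]; omega

lemma pi0_marr {n : ℕ} (hn : 3 ≤ n) :
    IsMarriageable (n+1) (insert {1} (insert {2} {Finset.Icc 3 (n+1)})) := by
  set T := Finset.Icc 3 (n+1) with hT
  have h3 : 3 ∈ T := mem_Icc3 hn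
  have h1T : ({1} : Finset ℕ) ≠ T := by
    intro e; rw [← e] at h3; simp at h3
  have h2T : ({2} : Finset ℕ) ≠ T := by
    intro e; rw [← e] at h3; simp at h3
  have h12T : ({1, 2} : Finset ℕ) ≠ T := by
    intro e; rw [← e] at h3; simp at h3
  have h12 : ({1} : Finset ℕ) ≠ {2} := by simp
  have hmemT : ∀ x ∈ T, 3 ≤ x ∧ x ≤ n + 1 := fun x hx => Finset.mem_Icc.1 hx
  have hpart : IsPartitionOf (n+1) (insert {1} (insert {2} {T})) := by
    refine ⟨?_, ?_, ?_⟩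
    · intro A hA
      simp only [Finset.mem_insert, Finset.mem_singleton] at hA
      rcases hA with rfl | rfl | rfl
      · exact ⟨1, by simp⟩
      · exact ⟨2, by simp⟩
      · exact ⟨3, h3⟩
    · intro A hA B hB hAB
      simp only [Finset.mem_insert, Finset.mem_singleton] at hA hB
      rw [Finset.disjoint_left]
      rcases hA with rfl | rfl | rfl <;> rcases hB with rfl | rfl | rfl <;>
        first
        | exact absurd rfl hAB
        | (intro x hx hx'; simp only [Finset.mem_singleton] at *;
           first | (subst hx; have := hmemT _ hx'; omega)
                 | (subst hx'; have := hmemT _ hx; omega) | omega)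
    · intro x
      simp only [Finset.mem_insert, Finset.mem_singleton, Finset.mem_Icc]
      constructor
      · intro hx
        by_cases h1 : x = 1
        · exact ⟨{1}, Or.inl rfl, by simp [h1]⟩
        by_cases h2 : x = 2
        · exact ⟨{2}, Or.inr (Or.inl rfl), by simp [h2]⟩
        · exact ⟨T, Or.inr (Or.inr rfl), Finset.mem_Icc.2 (by omega)⟩
      · rintro ⟨A, (rfl | rfl | rfl), hxA⟩
        · simp at hxA; omega
        · simp at hxA; omega
        · have := hmemT _ hxA; omega
  have hnc : ¬ Crossing (insert {1} (insert {2} {T})) := by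
    rintro ⟨A, hA, B, hB, hAB, a, ha, b, hb, c, hc, d, hd, g1, g2, g3⟩
    simp only [Finset.mem_insert, Finset.mem_singleton] at hA hB
    rcases hA with rfl | rfl | rfl
    · simp at ha hb; omega
    · simp at ha hb; omega
    · rcases hB with rfl | rfl | rfl
      · simp at hc hd; omega
      · simp at hc hd; omega
      · exact hAB rfl
  refine ⟨⟨hpart, hnc⟩, 1, 2, by omega, by simp, by simp, ?_⟩
  have hmerge : mergeSingles (insert {1} (insert {2} {T})) 1 2
      = insert {1, 2} ({T} : Finset (Finset ℕ)) := by
    unfold mergeSingles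
    rw [Finset.erase_insert (by simp [h1T, h12]),
      Finset.erase_insert (by simp [h2T])]
  rw [hmerge]
  constructor
  · refine ⟨?_, ?_, ?_⟩
    · intro A hA
      simp only [Finset.mem_insert, Finset.mem_singleton] at hA
      rcases hA with rfl | rfl
      · exact ⟨1, by simp⟩
      · exact ⟨3, h3⟩
    · intro A hA B hB hAB
      simp only [Finset.mem_insert, Finset.mem_singleton] at hA hB
      rw [Finset.disjoint_left]
      rcases hA with rfl | rfl <;> rcases hB with rfl | rfl <;>
        first
        | exact absurd rfl hAB
        | (intro x hx hx'; simp only [Finset.mem_insert, Finset.mem_singleton] at hx hx' <;>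
           first | (have := hmemT _ hx'; omega) | (have := hmemT _ hx; omega))
    · intro x
      simp only [Finset.mem_insert, Finset.mem_singleton, Finset.mem_Icc]
      constructor
      · intro hx
        by_cases h1 : x ≤ 2
        · exact ⟨{1, 2}, Or.inl rfl, by simp; omega⟩
        · exact ⟨T, Or.inr rfl, Finset.mem_Icc.2 (by omega)⟩
      · rintro ⟨A, (rfl | rfl), hxA⟩
        · simp at hxA; omega
        · have := hmemT _ hxA; omega
  · rintro ⟨A, hA, B, hB, hAB, a, ha, b, hb, c, hc, d, hd, g1, g2, g3⟩
    simp only [Finset.mem_insert, Finset.mem_singleton] at hA hB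
    rcases hA with rfl | rfl
    · simp only [Finset.mem_insert, Finset.mem_singleton] at ha hb
      rcases hB with rfl | rfl
      · exact hAB rfl
      · have := hmemT _ hc; omega
    · rcases hB with rfl | rfl
      · simp only [Finset.mem_insert, Finset.mem_singleton] at hc hd
        have := hmemT _ ha; omega
      · exact hAB rfl

theorem stmt4 (n : ℕ) (hn : 3 ≤ n) : Mnum n < Mnum (n + 1) := by
  set S : Set (Finset (Finset ℕ)) := {π | IsMarriageable n π}
  set S' : Set (Finset (Finset ℕ)) := {π | IsMarriageable (n+1) π}
  have himg : (fun π => insert ({n+1} : Finset ℕ) π) '' S ⊆ S' :=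
    fun π ⟨σ, hσ, he⟩ => he ▸ extend_marr hσ
  have hpi0 : (insert {1} (insert {2} {Finset.Icc 3 (n+1)}) : Finset (Finset ℕ)) ∈ S' :=
    pi0_marr hn
  have hpi0' : (insert {1} (insert {2} {Finset.Icc 3 (n+1)}) : Finset (Finset ℕ))
      ∉ (fun π => insert ({n+1} : Finset ℕ) π) '' S := by
    rintro ⟨σ, _, he⟩
    have hm : ({n+1} : Finset ℕ) ∈ insert {1} (insert {2} ({Finset.Icc 3 (n+1)} : Finset (Finset ℕ))) := by
      rw [← he]; exact Finset.mem_insert_self _ _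
    simp only [Finset.mem_insert, Finset.mem_singleton] at hm
    have h3 : 3 ∈ Finset.Icc 3 (n+1) := mem_Icc3 hn
    rcases hm with e | e | e
    · have : n + 1 ∈ ({1} : Finset ℕ) := e ▸ Finset.mem_singleton_self _
      simp at this; omega
    · have : n + 1 ∈ ({2} : Finset ℕ) := e ▸ Finset.mem_singleton_self _
      simp at this; omega
    · rw [← e] at h3; simp at h3; omega
  have hinj : Set.InjOn (fun π => insert ({n+1} : Finset ℕ) π) S := by
    intro π hπ σ hσ he
    have h1 : ({n+1} : Finset ℕ) ∉ π := singleton_top_notMem hπ.1.1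
    have h2 : ({n+1} : Finset ℕ) ∉ σ := singleton_top_notMem hσ.1.1
    have := congrArg (fun s => s.erase ({n+1} : Finset ℕ)) he
    simpa [Finset.erase_insert h1, Finset.erase_insert h2] using this
  have hss : (fun π => insert ({n+1} : Finset ℕ) π) '' S ⊂ S' :=
    ⟨himg, fun h => hpi0' (h hpi0)⟩
  have := Set.ncard_lt_ncard hss (parts_finite (n+1))
  rwa [Set.ncard_image_of_injOn hinj] at this
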